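/- Chain-rule sum-capacity conservation for the full polar transform over possibly different channels: for any N = 2ⁿ and any B-DMCs W₁,…,W_N assigned to the N output coordinates of the length-N polar transform, the bit channels satisfy Σ_{i=1}^{N} I(W_N^{(i)}) = Σ_{j=1}^{N} I(W_j). -/
import Mathlib


open Matrix Finset Filter

/-- A binary-input discrete memoryless channel (B-DMC) with finite output alphabet `Y`:
nonnegative transition probabilities summing to one for each input. -/
def IsBDMC {Y : Type} [Fintype Y] (W : ZMod 2 → Y → ℝ) : Prop :=
  (∀ x y, 0 ≤ W x y) ∧ ∀ x, ∑ y, W x y = 1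

/-- The symmetric capacity `I(W)` of a B-DMC (terms with `W x y = 0` vanish automatically). -/
noncomputable def symCap {Y : Type} [Fintype Y] (W : ZMod 2 → Y → ℝ) : ℝ :=
  ∑ x : ZMod 2, ∑ y, (1 / 2) * W x y * Real.logb 2 (W x y / ((W 0 y + W 1 y) / 2))

/-- The Bhattacharyya parameter `Z(W)` of a B-DMC. -/
noncomputable def bhat {Y : Type} [Fintype Y] (W : ZMod 2 → Y → ℝ) : ℝ :=
  ∑ y, Real.sqrt (W 0 y * W 1 y)

/-- The zero-capacity (punctured) channel with singleton output alphabet. -/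
def puncturedChannel : ZMod 2 → PUnit → ℝ := fun _ _ => 1

/-- The 2×2 polar kernel `F = [[1,0],[1,1]]` over GF(2). -/
def polarKernel : Matrix (Fin 2) (Fin 2) (ZMod 2) := !![1, 0; 1, 1]

/-- Kronecker product of square GF(2) matrices, the product index set identified with
`Fin (a*b)` via lexicographic pairing. -/
def kron {a b : ℕ} (A : Matrix (Fin a) (Fin a) (ZMod 2)) (B : Matrix (Fin b) (Fin b) (ZMod 2)) :
    Matrix (Fin (a * b)) (Fin (a * b)) (ZMod 2) :=
  Matrix.reindex finProdFinEquiv finProdFinEquiv (Matrix.kroneckerMap (· * ·) A B)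

/-- The `n`-fold Kronecker power; `kronPow A 0` is the 1×1 identity. -/
def kronPow (A : Matrix (Fin 2) (Fin 2) (ZMod 2)) :
    (n : ℕ) → Matrix (Fin (2 ^ n)) (Fin (2 ^ n)) (ZMod 2)
  | 0 => 1
  | n + 1 => Matrix.reindex (finCongr (by ring)) (finCongr (by ring)) (kron A (kronPow A n))

/-- The bit-reversal permutation on `Fin (2^n)`: reverse the `n` binary digits. -/
def bitRev (n : ℕ) : Equiv.Perm (Fin (2 ^ n)) :=
  finFunctionFinEquiv.symm.trans
    ((Equiv.arrowCongr Fin.revPerm (Equiv.refl (Fin 2))).trans finFunctionFinEquiv)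

/-- The polar transform matrix `G_N = B_N · F^{⊗n}` over GF(2), `N = 2^n`, where `B_N` is the
bit-reversal permutation matrix. -/
def polarG (n : ℕ) : Matrix (Fin (2 ^ n)) (Fin (2 ^ n)) (ZMod 2) :=
  ((bitRev n).permMatrix (ZMod 2)) * kronPow polarKernel n

/-- Polar encoding `x = u · G_N`. -/
def polarEncode (n : ℕ) (u : Fin (2 ^ n) → ZMod 2) : Fin (2 ^ n) → ZMod 2 :=
  Matrix.vecMul u (polarG n)

open scoped Classical in
/-- The `i`-th bit channel `W_N^{(i)}` of the length-`N = 2^n` polar transform where output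
coordinate `j` is transmitted through the B-DMC `W j` (output alphabet `Y j`):  input `u_i`,
output `(y₁,…,y_N, u₁,…,u_{i-1})`, and transition probability
`2^{-(N-1)} · Σ_{u_{i+1}^N} Π_j W_j(x_j)(y_j)` with `x = u·G_N`. -/
noncomputable def bitChannel (n : ℕ) (Y : Fin (2 ^ n) → Type) [∀ j, Fintype (Y j)]
    (W : ∀ j, ZMod 2 → Y j → ℝ) (i : Fin (2 ^ n)) :
    ZMod 2 → ((∀ j, Y j) × (Fin i.val → ZMod 2)) → ℝ :=
  fun ui out =>
    (1 / 2 : ℝ) ^ (2 ^ n - 1) *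
      ∑ u ∈ Finset.univ.filter (fun u : Fin (2 ^ n) → ZMod 2 =>
          u i = ui ∧ ∀ j : Fin i.val, u (Fin.castLE i.isLt.le j) = out.2 j),
        ∏ j, W j (polarEncode n u j) (out.1 j)

open scoped Classical in
/-- The good index set `𝒢_N(β) = { i : Z(W_N^{(i)}) < 2^{-N^β}/N }`. -/
noncomputable def goodSet (n : ℕ) (Y : Fin (2 ^ n) → Type) [∀ j, Fintype (Y j)]
    (W : ∀ j, ZMod 2 → Y j → ℝ) (β : ℝ) : Finset (Fin (2 ^ n)) :=
  Finset.univ.filter fun i =>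
    bhat (bitChannel n Y W i) < (2 : ℝ) ^ (-((2 : ℝ) ^ n) ^ β) / (2 : ℝ) ^ n

set_option maxHeartbeats 1000000

/-! ### auxiliary entropy machinery -/

noncomputable def ent (t : ℝ) : ℝ := t * Real.logb 2 t

lemma ent_mul (a b : ℝ) : ent (a * b) = a * ent b + b * ent a := by
  rcases eq_or_ne a 0 with h | h; · simp [ent, h]
  rcases eq_or_ne b 0 with h' | h'; · simp [ent, h']
  simp only [ent, Real.logb_mul h h']; ring

lemma term_eq (q m : ℝ) (hq : 0 ≤ q) (hm : q ≤ m) :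
    q * Real.logb 2 (2 * q / m) = q + ent q - q * Real.logb 2 m := by
  rcases eq_or_lt_of_le hq with h | h; · simp [ent, ← h]
  have hm0 : m ≠ 0 := (h.trans_le hm).ne'
  rw [Real.logb_div (mul_ne_zero two_ne_zero h.ne') hm0, Real.logb_mul (by norm_num) h.ne',
    Real.logb_self_eq_one (by norm_num)]
  simp [ent]; ring

lemma zmod2_sum (F : ZMod 2 → ℝ) : ∑ c, F c = F 0 + F 1 := by
  rw [show (Finset.univ : Finset (ZMod 2)) = {0, 1} by decide]
  rw [Finset.sum_pair (by decide)]

lemma entropy_pi : ∀ (m : ℕ) (Z : Fin m → Type) (_ : ∀ j, Fintype (Z j))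
    (g : ∀ j, Z j → ℝ) (_ : ∀ j, ∑ t, g j t = 1),
    ∑ z : ∀ j, Z j, ent (∏ j, g j (z j)) = ∑ j, ∑ t, ent (g j t) := by
  intro m
  induction m with
  | zero => intro Z _ g hg; simp [ent]
  | succ m ih =>
    intro Z _ g hg
    rw [← Equiv.sum_comp (Fin.consEquiv Z), Fintype.sum_prod_type]
    have key : ∀ (a : Z 0) (w : ∀ j : Fin m, Z j.succ),
        ent (∏ j, g j ((Fin.consEquiv Z) (a, w) j))
          = g 0 a * ent (∏ j : Fin m, g j.succ (w j))
            + (∏ j : Fin m, g j.succ (w j)) * ent (g 0 a) := by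
      intro a w
      rw [Fin.prod_univ_succ]
      simpa [Fin.consEquiv] using ent_mul (g 0 a) (∏ j : Fin m, g j.succ (w j))
    have hmass : ∑ w : ∀ j : Fin m, Z j.succ, ∏ j : Fin m, g j.succ (w j) = 1 := by
      classical
      rw [← Fintype.piFinset_univ, ← Finset.prod_univ_sum (fun _ => Finset.univ)
        (fun (j : Fin m) (t : Z j.succ) => g j.succ t)]
      simp [hg]
    calc ∑ a : Z 0, ∑ w : ∀ j : Fin m, Z j.succ, ent (∏ j, g j ((Fin.consEquiv Z) (a, w) j))
        = ∑ a : Z 0, ∑ w : ∀ j : Fin m, Z j.succ,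
            (g 0 a * ent (∏ j : Fin m, g j.succ (w j))
              + (∏ j : Fin m, g j.succ (w j)) * ent (g 0 a)) := by
          exact Finset.sum_congr rfl fun a _ => Finset.sum_congr rfl fun w _ => key a w
      _ = ∑ j : Fin (m+1), ∑ t, ent (g j t) := by
          rw [Fin.sum_univ_succ]
          simp only [Finset.sum_add_distrib, ← Finset.mul_sum, ← Finset.sum_mul]
          rw [ih _ _ (fun j => g j.succ) (fun j => hg j.succ), hmass, hg 0]
          simp only [one_mul, mul_one]
          exact add_comm _ _

/-! ### invertibility of the polar transform -/

lemma reindex_mul {α β : Type*} [Fintype α] [Fintype β] [DecidableEq α] [DecidableEq β]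
    (e : α ≃ β) (M N : Matrix α α (ZMod 2)) :
    (Matrix.reindex e e M) * (Matrix.reindex e e N) = Matrix.reindex e e (M * N) := by
  simp only [Matrix.reindex_apply]
  exact Matrix.submatrix_mul_equiv M N _ e.symm _

lemma kron_mul {a b : ℕ} (A C : Matrix (Fin a) (Fin a) (ZMod 2))
    (B D : Matrix (Fin b) (Fin b) (ZMod 2)) :
    kron A B * kron C D = kron (A * C) (B * D) := by
  unfold kron
  rw [reindex_mul, Matrix.mul_kronecker_mul]

lemma kron_one_one {a b : ℕ} :
    kron (1 : Matrix (Fin a) (Fin a) (ZMod 2)) (1 : Matrix (Fin b) (Fin b) (ZMod 2)) = 1 := by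
  unfold kron
  rw [Matrix.one_kronecker_one, Matrix.reindex_apply, Matrix.submatrix_one_equiv]

lemma kronPow_sq (n : ℕ) : kronPow polarKernel n * kronPow polarKernel n = 1 := by
  induction n with
  | zero => simp [kronPow]
  | succ n ih =>
    show Matrix.reindex _ _ _ * Matrix.reindex _ _ _ = 1
    rw [reindex_mul, kron_mul, ih]
    have hF : polarKernel * polarKernel = 1 := by decide
    rw [hF, kron_one_one, Matrix.reindex_apply, Matrix.submatrix_one_equiv]

lemma vecMul_permMatrix {N : ℕ} (σ : Equiv.Perm (Fin N)) (u : Fin N → ZMod 2) :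
    Matrix.vecMul u (σ.permMatrix (ZMod 2)) = u ∘ ⇑σ⁻¹ := by
  funext j
  simp only [Matrix.vecMul, dotProduct, Equiv.Perm.permMatrix, PEquiv.toMatrix_apply,
    Equiv.toPEquiv_apply, Option.mem_def, Option.some_inj]
  rw [Finset.sum_eq_single (σ⁻¹ j)]
  · simp
  · intro b _ hb
    rw [if_neg, mul_zero]
    intro h; exact hb (by simp [← h])
  · simp

lemma polarEncode_bijective (n : ℕ) : Function.Bijective (polarEncode n) := by
  have h1 : Function.Bijective (fun u : Fin (2^n) → ZMod 2 => u ∘ ⇑(bitRev n)⁻¹) :=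
    (Equiv.arrowCongr (((bitRev n)⁻¹).symm) (Equiv.refl (ZMod 2))).symm.bijective
  have h2 : Function.Bijective
      (fun v : Fin (2^n) → ZMod 2 => Matrix.vecMul v (kronPow polarKernel n)) := by
    apply Function.Involutive.bijective
    intro v
    simp only [Matrix.vecMul_vecMul, kronPow_sq, Matrix.vecMul_one]
  have : polarEncode n = (fun v : Fin (2^n) → ZMod 2 => Matrix.vecMul v (kronPow polarKernel n)) ∘
      (fun u : Fin (2^n) → ZMod 2 => u ∘ ⇑(bitRev n)⁻¹) := by
    funext u
    simp only [polarEncode, polarG, Function.comp_apply, ← Matrix.vecMul_vecMul,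
      vecMul_permMatrix]
  rw [this]
  exact h2.comp h1

/-! ### the joint distribution and its prefix marginals -/

section joint

variable (n : ℕ) (Y : Fin (2 ^ n) → Type) [∀ j, Fintype (Y j)] (W : ∀ j, ZMod 2 → Y j → ℝ)

noncomputable def jointP (u : Fin (2 ^ n) → ZMod 2) (y : ∀ j, Y j) : ℝ :=
  ∏ j, ((1 : ℝ) / 2 * W j (polarEncode n u j) (y j))

open scoped Classical in
noncomputable def Mpre (k : ℕ) (y : ∀ j, Y j) (v : Fin k → ZMod 2) : ℝ :=
  ∑ u ∈ Finset.univ.filter (fun u : Fin (2 ^ n) → ZMod 2 =>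
      ∀ (j : Fin (2 ^ n)) (h : j.val < k), u j = v ⟨j.val, h⟩), jointP n Y W u y

noncomputable def Sent (k : ℕ) : ℝ :=
  ∑ y : ∀ j, Y j, ∑ v : Fin k → ZMod 2, ent (Mpre n Y W k y v)

variable (hW : ∀ j, IsBDMC (W j))
include hW

lemma jointP_nonneg (u : Fin (2 ^ n) → ZMod 2) (y : ∀ j, Y j) : 0 ≤ jointP n Y W u y :=
  Finset.prod_nonneg fun j _ => by
    have := (hW j).1 (polarEncode n u j) (y j); positivity

lemma Mpre_nonneg (k : ℕ) (y : ∀ j, Y j) (v : Fin k → ZMod 2) : 0 ≤ Mpre n Y W k y v :=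
  Finset.sum_nonneg fun u _ => jointP_nonneg n Y W hW u y

lemma sum_jointP_y (u : Fin (2 ^ n) → ZMod 2) :
    ∑ y : ∀ j, Y j, jointP n Y W u y = (1 / 2 : ℝ) ^ (2 ^ n) := by
  classical
  unfold jointP
  rw [← Fintype.piFinset_univ, ← Finset.prod_univ_sum (fun _ => Finset.univ)
    (fun (j : Fin (2 ^ n)) (t : Y j) => (1 : ℝ) / 2 * W j (polarEncode n u j) t)]
  have : ∀ j : Fin (2 ^ n), ∑ t : Y j, (1 : ℝ) / 2 * W j (polarEncode n u j) t = 1 / 2 := by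
    intro j
    rw [← Finset.mul_sum, (hW j).2, mul_one]
  rw [Finset.prod_congr rfl fun j _ => this j, Finset.prod_const]
  simp

lemma total_jointP : ∑ u : Fin (2 ^ n) → ZMod 2, ∑ y : ∀ j, Y j, jointP n Y W u y = 1 := by
  rw [Finset.sum_congr rfl fun u _ => sum_jointP_y n Y W hW u, Finset.sum_const]
  have : (Finset.univ : Finset (Fin (2 ^ n) → ZMod 2)).card = 2 ^ (2 ^ n) := by
    simp [Fintype.card_fun]
  rw [this]
  rw [nsmul_eq_mul]
  push_cast
  rw [one_div, inv_pow, mul_inv_cancel₀ (by positivity)]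

end joint

section joint2

variable (n : ℕ) (Y : Fin (2 ^ n) → Type) [∀ j, Fintype (Y j)] (W : ∀ j, ZMod 2 → Y j → ℝ)

open scoped Classical

lemma Mpre_rec (k : ℕ) (hk : k < 2 ^ n) (y : ∀ j, Y j) (v : Fin k → ZMod 2) :
    ∑ c : ZMod 2, Mpre n Y W (k + 1) y (Fin.snoc v c) = Mpre n Y W k y v := by
  unfold Mpre
  have hcond : ∀ (c : ZMod 2) (u : Fin (2 ^ n) → ZMod 2),
      (∀ (j : Fin (2 ^ n)) (h : j.val < k + 1), u j = (Fin.snoc v c : Fin (k+1) → ZMod 2) ⟨j.val, h⟩)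
        ↔ ((∀ (j : Fin (2 ^ n)) (h : j.val < k), u j = v ⟨j.val, h⟩) ∧ u ⟨k, hk⟩ = c) := by
    intro c u
    constructor
    · intro H
      constructor
      · intro j h
        have := H j (Nat.lt_succ_of_lt h)
        rwa [show (⟨j.val, Nat.lt_succ_of_lt h⟩ : Fin (k + 1)) = Fin.castSucc ⟨j.val, h⟩ from rfl,
          Fin.snoc_castSucc] at this
      · have := H ⟨k, hk⟩ (Nat.lt_succ_self k)
        rwa [show (⟨k, Nat.lt_succ_self k⟩ : Fin (k + 1)) = Fin.last k from rfl,
          Fin.snoc_last] at this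
    · rintro ⟨H1, H2⟩ j h
      rcases Nat.lt_succ_iff_lt_or_eq.mp h with h' | h'
      · rw [show (⟨j.val, h⟩ : Fin (k + 1)) = Fin.castSucc ⟨j.val, h'⟩ from rfl,
          Fin.snoc_castSucc]
        exact H1 j h'
      · have hj : j = ⟨k, hk⟩ := Fin.ext h'
        rw [show (⟨j.val, h⟩ : Fin (k + 1)) = Fin.last k from Fin.ext h', Fin.snoc_last, hj]
        exact H2
  have : ∀ c : ZMod 2,
      (Finset.univ.filter (fun u : Fin (2 ^ n) → ZMod 2 =>
        ∀ (j : Fin (2 ^ n)) (h : j.val < k + 1), u j = (Fin.snoc v c : Fin (k+1) → ZMod 2) ⟨j.val, h⟩))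
      = (Finset.univ.filter (fun u : Fin (2 ^ n) → ZMod 2 =>
          ∀ (j : Fin (2 ^ n)) (h : j.val < k), u j = v ⟨j.val, h⟩)).filter
          (fun u => u ⟨k, hk⟩ = c) := by
    intro c
    rw [Finset.filter_filter]
    ext u
    simp only [Finset.mem_filter, Finset.mem_univ, true_and]
    exact hcond c u
  refine Eq.trans (Finset.sum_congr rfl fun c _ => ?_) (Finset.sum_fiberwise _ (fun u => u ⟨k, hk⟩) _)
  rw [this c]

lemma Mpre_top (y : ∀ j, Y j) (v : Fin (2 ^ n) → ZMod 2) :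
    Mpre n Y W (2 ^ n) y v = jointP n Y W v y := by
  unfold Mpre
  have : (Finset.univ.filter (fun u : Fin (2 ^ n) → ZMod 2 =>
      ∀ (j : Fin (2 ^ n)) (h : j.val < 2 ^ n), u j = v ⟨j.val, h⟩)) = {v} := by
    ext u
    simp only [Finset.mem_filter, Finset.mem_univ, true_and, Finset.mem_singleton]
    constructor
    · intro H; funext j; have := H j j.isLt; rwa [Fin.eta] at this
    · rintro rfl j h; rw [Fin.eta]
  rw [this, Finset.sum_singleton]

lemma Mpre_zero (y : ∀ j, Y j) (v : Fin 0 → ZMod 2) :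
    Mpre n Y W 0 y v = ∑ u : Fin (2 ^ n) → ZMod 2, jointP n Y W u y := by
  unfold Mpre
  congr 1
  rw [Finset.filter_true_of_mem]
  intro u _ j h
  omega

lemma sum_Mpre (k : ℕ) (hk : k ≤ 2 ^ n) (y : ∀ j, Y j) :
    ∑ v : Fin k → ZMod 2, Mpre n Y W k y v = ∑ u : Fin (2 ^ n) → ZMod 2, jointP n Y W u y := by
  unfold Mpre
  rw [← Finset.sum_fiberwise Finset.univ
    (fun u : Fin (2 ^ n) → ZMod 2 => fun j : Fin k => u ⟨j.val, lt_of_lt_of_le j.isLt hk⟩)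
    (fun u => jointP n Y W u y)]
  refine Finset.sum_congr rfl fun v _ => ?_
  congr 1
  ext u
  simp only [Finset.mem_filter, Finset.mem_univ, true_and]
  constructor
  · intro H
    funext j'
    have := H ⟨j'.val, lt_of_lt_of_le j'.isLt hk⟩ j'.isLt
    rwa [Fin.eta] at this
  · intro H j h
    exact congrFun H ⟨j.val, h⟩

lemma bitChannel_eq_Mpre (i : Fin (2 ^ n)) (ui : ZMod 2)
    (out : (∀ j, Y j) × (Fin i.val → ZMod 2)) :
    (1 / 2 : ℝ) * bitChannel n Y W i ui out
      = Mpre n Y W (i.val + 1) out.1 (Fin.snoc out.2 ui) := by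
  unfold bitChannel Mpre jointP
  have hfilt : (Finset.univ.filter (fun u : Fin (2 ^ n) → ZMod 2 =>
      u i = ui ∧ ∀ j : Fin i.val, u (Fin.castLE i.isLt.le j) = out.2 j))
    = (Finset.univ.filter (fun u : Fin (2 ^ n) → ZMod 2 =>
      ∀ (j : Fin (2 ^ n)) (h : j.val < i.val + 1), u j = (Fin.snoc out.2 ui : Fin (i.val+1) → ZMod 2) ⟨j.val, h⟩)) := by
    apply Finset.filter_congr
    intro u _
    constructor
    · rintro ⟨H1, H2⟩ j h
      rcases Nat.lt_succ_iff_lt_or_eq.mp h with h' | h'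
      · rw [show (⟨j.val, h⟩ : Fin (i.val + 1)) = Fin.castSucc ⟨j.val, h'⟩ from rfl,
          Fin.snoc_castSucc]
        have := H2 ⟨j.val, h'⟩
        rwa [show Fin.castLE i.isLt.le ⟨j.val, h'⟩ = j from Fin.ext rfl] at this
      · rw [show (⟨j.val, h⟩ : Fin (i.val + 1)) = Fin.last i.val from Fin.ext h', Fin.snoc_last,
          show j = i from Fin.ext h']
        exact H1
    · intro H
      constructor
      · have := H i (Nat.lt_succ_self i.val)
        rwa [show (⟨i.val, Nat.lt_succ_self i.val⟩ : Fin (i.val + 1)) = Fin.last i.val from rfl,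
          Fin.snoc_last] at this
      · intro j
        have := H (Fin.castLE i.isLt.le j) (Nat.lt_succ_of_lt j.isLt)
        rwa [show (⟨(Fin.castLE i.isLt.le j).val, Nat.lt_succ_of_lt j.isLt⟩ : Fin (i.val + 1))
            = Fin.castSucc j from rfl, Fin.snoc_castSucc] at this
  rw [hfilt, Finset.mul_sum, Finset.mul_sum]
  refine Finset.sum_congr rfl fun u _ => ?_
  rw [Finset.prod_mul_distrib, Finset.prod_const, Finset.card_univ, Fintype.card_fin]
  rw [← mul_assoc, ← pow_succ', Nat.sub_add_cancel Nat.one_le_two_pow]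

end joint2

/-! ### capacity decomposition -/

lemma symCap_decomp {O : Type} [Fintype O] (K : ZMod 2 → O → ℝ) (hK : ∀ x o, 0 ≤ K x o) :
    symCap K = (∑ x : ZMod 2, ∑ o, ((1 / 2) * K x o + ent ((1 / 2) * K x o)))
      - ∑ o, ent ((1 / 2) * K 0 o + (1 / 2) * K 1 o) := by
  have hx01 : ∀ x : ZMod 2, x = 0 ∨ x = 1 := by decide
  have key : ∀ (x : ZMod 2) (o : O),
      (1 / 2) * K x o * Real.logb 2 (K x o / ((K 0 o + K 1 o) / 2))
        = (1 / 2) * K x o + ent ((1 / 2) * K x o)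
          - (1 / 2) * K x o * Real.logb 2 ((1 / 2) * K 0 o + (1 / 2) * K 1 o) := by
    intro x o
    have harg : K x o / ((K 0 o + K 1 o) / 2)
        = 2 * ((1 / 2) * K x o) / ((1 / 2) * K 0 o + (1 / 2) * K 1 o) := by
      ring_nf
    rw [harg]
    have hle : (1 / 2) * K x o ≤ (1 / 2) * K 0 o + (1 / 2) * K 1 o := by
      rcases hx01 x with h | h <;> subst h
      · have := hK 1 o; linarith
      · have := hK 0 o; linarith
    exact term_eq _ _ (by have := hK x o; linarith) hle
  unfold symCap
  rw [Finset.sum_congr rfl fun x _ => Finset.sum_congr rfl fun o _ => key x o]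
  simp only [Finset.sum_sub_distrib]
  congr 1
  rw [Finset.sum_comm]
  refine Finset.sum_congr rfl fun o _ => ?_
  rw [← Finset.sum_mul, zmod2_sum (fun x => (1 / 2 : ℝ) * K x o)]
  rfl

lemma snoc_sum (k : ℕ) (F : (Fin (k + 1) → ZMod 2) → ℝ) :
    ∑ x : ZMod 2, ∑ w : Fin k → ZMod 2, F (Fin.snoc w x) = ∑ v : Fin (k + 1) → ZMod 2, F v := by
  rw [← Equiv.sum_comp (Fin.snocEquiv (fun _ => ZMod 2)) F, Fintype.sum_prod_type]
  rfl

section main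

variable (n : ℕ) (Y : Fin (2 ^ n) → Type) [∀ j, Fintype (Y j)] (W : ∀ j, ZMod 2 → Y j → ℝ)
variable (hW : ∀ j, IsBDMC (W j))
include hW

lemma bitChannel_nonneg (i : Fin (2 ^ n)) (x : ZMod 2)
    (out : (∀ j, Y j) × (Fin i.val → ZMod 2)) : 0 ≤ bitChannel n Y W i x out := by
  unfold bitChannel
  apply mul_nonneg (by positivity)
  exact Finset.sum_nonneg fun u _ => Finset.prod_nonneg fun j _ => (hW j).1 _ _

lemma total_Mpre (k : ℕ) (hk : k ≤ 2 ^ n) :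
    ∑ y : ∀ j, Y j, ∑ v : Fin k → ZMod 2, Mpre n Y W k y v = 1 := by
  rw [Finset.sum_congr rfl fun y _ => sum_Mpre n Y W k hk y, Finset.sum_comm]
  exact total_jointP n Y W hW

lemma symCap_bitChannel (i : Fin (2 ^ n)) :
    symCap (bitChannel n Y W i) = 1 + Sent n Y W (i.val + 1) - Sent n Y W i.val := by
  rw [symCap_decomp _ (bitChannel_nonneg n Y W hW i)]
  have hq : ∀ (x : ZMod 2) (out : (∀ j, Y j) × (Fin i.val → ZMod 2)),
      (1 / 2 : ℝ) * bitChannel n Y W i x out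
        = Mpre n Y W (i.val + 1) out.1 (Fin.snoc out.2 x) :=
    fun x out => bitChannel_eq_Mpre n Y W i x out
  have hm : ∀ out : (∀ j, Y j) × (Fin i.val → ZMod 2),
      (1 / 2 : ℝ) * bitChannel n Y W i 0 out + (1 / 2) * bitChannel n Y W i 1 out
        = Mpre n Y W i.val out.1 out.2 := by
    intro out
    rw [hq 0 out, hq 1 out,
      ← zmod2_sum (fun c => Mpre n Y W (i.val + 1) out.1 (Fin.snoc out.2 c))]
    exact Mpre_rec n Y W i.val i.isLt out.1 out.2
  have e1 : ∑ x : ZMod 2, ∑ out : (∀ j, Y j) × (Fin i.val → ZMod 2),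
      ((1 / 2) * bitChannel n Y W i x out + ent ((1 / 2) * bitChannel n Y W i x out))
      = 1 + Sent n Y W (i.val + 1) := by
    have : ∀ x : ZMod 2, ∑ out : (∀ j, Y j) × (Fin i.val → ZMod 2),
        ((1 / 2) * bitChannel n Y W i x out + ent ((1 / 2) * bitChannel n Y W i x out))
        = ∑ y : ∀ j, Y j, ∑ w : Fin i.val → ZMod 2,
            (Mpre n Y W (i.val + 1) y (Fin.snoc w x)
              + ent (Mpre n Y W (i.val + 1) y (Fin.snoc w x))) := by
      intro x
      rw [Fintype.sum_prod_type]
      exact Finset.sum_congr rfl fun y _ => Finset.sum_congr rfl fun w _ => by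
        rw [hq x (y, w)]
    rw [Finset.sum_congr rfl fun x _ => this x]
    rw [Finset.sum_comm]
    have : ∀ y : ∀ j, Y j, ∑ x : ZMod 2, ∑ w : Fin i.val → ZMod 2,
        (Mpre n Y W (i.val + 1) y (Fin.snoc w x) + ent (Mpre n Y W (i.val + 1) y (Fin.snoc w x)))
        = ∑ v : Fin (i.val + 1) → ZMod 2,
            (Mpre n Y W (i.val + 1) y v + ent (Mpre n Y W (i.val + 1) y v)) := fun y =>
      snoc_sum i.val (fun v => Mpre n Y W (i.val + 1) y v + ent (Mpre n Y W (i.val + 1) y v))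
    rw [Finset.sum_congr rfl fun y _ => this y]
    simp only [Finset.sum_add_distrib]
    rw [total_Mpre n Y W hW (i.val + 1) i.isLt]
    rfl
  have e2 : ∑ out : (∀ j, Y j) × (Fin i.val → ZMod 2),
      ent ((1 / 2) * bitChannel n Y W i 0 out + (1 / 2) * bitChannel n Y W i 1 out)
      = Sent n Y W i.val := by
    rw [Fintype.sum_prod_type]
    exact Finset.sum_congr rfl fun y _ => Finset.sum_congr rfl fun w _ => by rw [hm (y, w)]
  rw [e1, e2]

end main

section boundary

variable (n : ℕ) (Y : Fin (2 ^ n) → Type) [∀ j, Fintype (Y j)] (W : ∀ j, ZMod 2 → Y j → ℝ)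
variable (hW : ∀ j, IsBDMC (W j))
include hW

/-- The prod-pair equivalence. -/
def pairEquiv : (∀ j : Fin (2 ^ n), ZMod 2 × Y j) ≃ ((Fin (2 ^ n) → ZMod 2) × (∀ j, Y j)) where
  toFun z := (fun j => (z j).1, fun j => (z j).2)
  invFun p := fun j => (p.1 j, p.2 j)
  left_inv z := rfl
  right_inv p := rfl

lemma Sent_top :
    Sent n Y W (2 ^ n) = ∑ j, ∑ p : ZMod 2 × Y j, ent ((1 / 2) * W j p.1 p.2) := by
  unfold Sent
  rw [Finset.sum_congr rfl fun y _ => Finset.sum_congr rfl fun v _ => by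
    rw [Mpre_top n Y W y v]]
  rw [Finset.sum_comm]
  have hb := polarEncode_bijective n
  have e1 : ∑ v : Fin (2 ^ n) → ZMod 2, ∑ y : ∀ j, Y j, ent (jointP n Y W v y)
      = ∑ x : Fin (2 ^ n) → ZMod 2, ∑ y : ∀ j, Y j,
          ent (∏ j, ((1 : ℝ) / 2 * W j (x j) (y j))) := by
    exact (Function.Bijective.sum_comp hb
      (fun x => ∑ y : ∀ j, Y j, ent (∏ j, ((1 : ℝ) / 2 * W j (x j) (y j))))).symm ▸ rfl
  rw [e1]
  have e3 : ∑ z : ∀ j : Fin (2 ^ n), ZMod 2 × Y j,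
      ent (∏ j, ((1 : ℝ) / 2 * W j (z j).1 (z j).2))
      = ∑ x : Fin (2 ^ n) → ZMod 2, ∑ y : ∀ j, Y j,
          ent (∏ j, ((1 : ℝ) / 2 * W j (x j) (y j))) :=
    (Equiv.sum_comp (pairEquiv n Y)
      (fun p : (Fin (2 ^ n) → ZMod 2) × (∀ j, Y j) =>
        ent (∏ j, ((1 : ℝ) / 2 * W j (p.1 j) (p.2 j))))).trans
      (Fintype.sum_prod_type (f := fun p : (Fin (2 ^ n) → ZMod 2) × (∀ j, Y j) =>
        ent (∏ j, ((1 : ℝ) / 2 * W j (p.1 j) (p.2 j)))))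
  rw [← e3]
  have e2 : ∑ z : ∀ j : Fin (2 ^ n), ZMod 2 × Y j,
      ent (∏ j, ((1 : ℝ) / 2 * W j (z j).1 (z j).2))
      = ∑ j, ∑ p : ZMod 2 × Y j, ent ((1 / 2) * W j p.1 p.2) := by
    refine entropy_pi (2 ^ n) (fun j => ZMod 2 × Y j) (fun j => inferInstance)
      (fun j p => (1 : ℝ) / 2 * W j p.1 p.2) (fun j => ?_)
    rw [Fintype.sum_prod_type, zmod2_sum (fun a => ∑ t : Y j, (1 : ℝ) / 2 * W j a t)]
    rw [← Finset.mul_sum, ← Finset.mul_sum, (hW j).2, (hW j).2]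
    norm_num
  exact e2

lemma Sent_zero :
    Sent n Y W 0 = ∑ j, ∑ t : Y j, ent ((1 / 2) * W j 0 t + (1 / 2) * W j 1 t) := by
  unfold Sent
  rw [Finset.sum_congr rfl fun y _ => Finset.sum_congr rfl fun v _ => by
    rw [Mpre_zero n Y W y v]]
  have hcard : ∑ y : ∀ j, Y j, ∑ _v : Fin 0 → ZMod 2,
      ent (∑ u : Fin (2 ^ n) → ZMod 2, jointP n Y W u y)
      = ∑ y : ∀ j, Y j, ent (∑ u : Fin (2 ^ n) → ZMod 2, jointP n Y W u y) := by
    refine Finset.sum_congr rfl fun y _ => ?_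
    rw [Finset.sum_const, Finset.card_univ]
    have : Fintype.card (Fin 0 → ZMod 2) = 1 := by simp
    rw [this, one_smul]
  rw [hcard]
  have hb := polarEncode_bijective n
  have hpY : ∀ y : ∀ j, Y j, ∑ u : Fin (2 ^ n) → ZMod 2, jointP n Y W u y
      = ∏ j, ((1 / 2 : ℝ) * W j 0 (y j) + (1 / 2) * W j 1 (y j)) := by
    intro y
    have e1 : ∑ u : Fin (2 ^ n) → ZMod 2, jointP n Y W u y
        = ∑ x : Fin (2 ^ n) → ZMod 2, ∏ j, ((1 : ℝ) / 2 * W j (x j) (y j)) :=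
      Function.Bijective.sum_comp hb (fun x => ∏ j, ((1 : ℝ) / 2 * W j (x j) (y j)))
    rw [e1, ← Fintype.piFinset_univ, ← Finset.prod_univ_sum (fun _ => Finset.univ)
      (fun (j : Fin (2 ^ n)) (a : ZMod 2) => (1 : ℝ) / 2 * W j a (y j))]
    exact Finset.prod_congr rfl fun j _ =>
      zmod2_sum (fun a => (1 : ℝ) / 2 * W j a (y j))
  rw [Finset.sum_congr rfl fun y _ => by rw [hpY y]]
  refine entropy_pi (2 ^ n) Y (fun j => inferInstance)
    (fun j t => (1 / 2 : ℝ) * W j 0 t + (1 / 2) * W j 1 t) (fun j => ?_)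
  rw [Finset.sum_add_distrib, ← Finset.mul_sum, ← Finset.mul_sum, (hW j).2, (hW j).2]
  norm_num

end boundary


/-- Chain-rule sum-capacity conservation for the full polar transform over
possibly different channels: `Σ_{i=1}^{N} I(W_N^{(i)}) = Σ_{j=1}^{N} I(W_j)` for `N = 2^n`. -/
theorem polar_sum_capacity (n : ℕ) (Y : Fin (2 ^ n) → Type) [∀ j, Fintype (Y j)]
    (W : ∀ j, ZMod 2 → Y j → ℝ) (hW : ∀ j, IsBDMC (W j)) :
    ∑ i, symCap (bitChannel n Y W i) = ∑ j, symCap (W j) := by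
  have lhs : ∑ i : Fin (2 ^ n), symCap (bitChannel n Y W i)
      = ∑ i : Fin (2 ^ n), (1 + Sent n Y W (i.val + 1) - Sent n Y W i.val) :=
    Finset.sum_congr rfl fun i _ => symCap_bitChannel n Y W hW i
  rw [lhs]
  have tele : ∑ i : Fin (2 ^ n), (1 + Sent n Y W (i.val + 1) - Sent n Y W i.val)
      = (2 ^ n : ℝ) + (Sent n Y W (2 ^ n) - Sent n Y W 0) := by
    have : ∀ i : Fin (2 ^ n), (1 + Sent n Y W (i.val + 1) - Sent n Y W i.val)
        = 1 + (Sent n Y W (i.val + 1) - Sent n Y W i.val) := fun i => by ring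
    rw [Finset.sum_congr rfl fun i _ => this i, Finset.sum_add_distrib, Finset.sum_const,
      Finset.card_univ, Fintype.card_fin]
    rw [Fin.sum_univ_eq_sum_range (fun k => Sent n Y W (k + 1) - Sent n Y W k),
      Finset.sum_range_sub (fun k => Sent n Y W k)]
    simp
  rw [tele, Sent_top n Y W hW, Sent_zero n Y W hW]
  have rhs : ∀ j, symCap (W j)
      = 1 + ∑ p : ZMod 2 × Y j, ent ((1 / 2) * W j p.1 p.2)
        - ∑ t : Y j, ent ((1 / 2) * W j 0 t + (1 / 2) * W j 1 t) := by
    intro j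
    rw [symCap_decomp (W j) (hW j).1]
    have hmass : ∑ x : ZMod 2, ∑ t : Y j, ((1 / 2 : ℝ) * W j x t + ent ((1 / 2) * W j x t))
        = 1 + ∑ p : ZMod 2 × Y j, ent ((1 / 2) * W j p.1 p.2) := by
      simp only [Finset.sum_add_distrib]
      have h1 : ∑ x : ZMod 2, ∑ t : Y j, (1 / 2 : ℝ) * W j x t = 1 := by
        rw [zmod2_sum (fun x => ∑ t : Y j, (1 / 2 : ℝ) * W j x t), ← Finset.mul_sum,
          ← Finset.mul_sum, (hW j).2, (hW j).2]
        norm_num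
      rw [h1, Fintype.sum_prod_type]
    rw [hmass]
  rw [Finset.sum_congr rfl fun j _ => rhs j]
  simp only [Finset.sum_sub_distrib, Finset.sum_add_distrib, Finset.sum_const,
    Finset.card_univ, Fintype.card_fin]
  push_cast
  ring
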